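/- Let C_v ≥ 1 be a constant such that C̃_v(c,a) ≤ C_v · max{1, |c|_v, |a|_v} for all (c,a) ∈ K^{d-1}. Then for every 0 ≤ i ≤ d−2, every C ≥ 1 and every ε > 0 satisfying C^d·ε > max{1, C_v·C}, and every (c,a) ∈ K^{d-1} with max{|c|_v,|a|_v} ≥ C and (c,a) ∉ U_i(ε,C), one has g_{c,a,v}(c_i) ≤ log max{|c|_v,|a|_v} + (1/d)·log ε + (1/(d(d−1)))·log α_v. -/

import Mathlib

open Filter

noncomputable section

variable {K : Type*} [Field K]

/-- Elementary symmetric polynomial of degree `k` evaluated at `c = (c_1, …, c_{d-2})`. -/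
def esymmK {n : ℕ} (c : Fin n → K) (k : ℕ) : K :=
  ∑ s ∈ Finset.powersetCard k (Finset.univ : Finset (Fin n)), ∏ i ∈ s, c i

/-- The polynomial `P_{c,a}` of degree `d = n + 2`:
`P_{c,a}(z) = z^d/d + ∑_{j=2}^{d-1} (-1)^{d-j} σ_{d-j}(c) z^j / j + a^d`. -/
def Pca {n : ℕ} (c : Fin n → K) (a z : K) : K :=
  z ^ (n + 2) / ((n + 2 : ℕ) : K)
    + ∑ j ∈ Finset.Icc 2 (n + 1),
        ((-1 : K) ^ (n + 2 - j) * esymmK c (n + 2 - j) * z ^ j) / ((j : ℕ) : K)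
    + a ^ (n + 2)

/-- The critical points `c_0 = 0, c_1, …, c_{d-2}` of `P_{c,a}`. -/
def crit {n : ℕ} (c : Fin n → K) (i : Fin (n + 1)) : K :=
  if h : (i : ℕ) = 0 then 0 else c ⟨(i : ℕ) - 1, by have := i.isLt; omega⟩

/-- `|c|_v = max_{1 ≤ i ≤ d-2} |c_i|_v` (with value `0` when there are no `c_i`'s). -/
def cnorm {n : ℕ} (v : AbsoluteValue K ℝ) (c : Fin n → K) : ℝ :=
  Finset.fold max 0 (fun i => v (c i)) (Finset.univ : Finset (Fin n))

/-- `α_v = max_{1 ≤ j ≤ d} |j|_v⁻¹`. -/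
def alphaV (v : AbsoluteValue K ℝ) (d : ℕ) : ℝ :=
  Finset.fold max 0 (fun j : ℕ => (v ((j : ℕ) : K))⁻¹) (Finset.Icc 1 d)

/-- `C_v(c,a) = max{ |d|_v^{1/(d-1)}, |d|_v^{1/d}·|a|_v,
max_{2≤j≤d-1} (|σ_{d-j}(c)|_v · |d/j|_v)^{1/(d-j)} }`, with `d = n + 2`. -/
def Cv {n : ℕ} (v : AbsoluteValue K ℝ) (c : Fin n → K) (a : K) : ℝ :=
  max ((v (((n + 2 : ℕ) : K))) ^ ((1 : ℝ) / ((n : ℝ) + 1)))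
    (max ((v (((n + 2 : ℕ) : K))) ^ ((1 : ℝ) / ((n : ℝ) + 2)) * v a)
      (Finset.fold max 0
        (fun j : ℕ =>
          (v (esymmK c (n + 2 - j)) * v (((n + 2 : ℕ) : K) / ((j : ℕ) : K)))
            ^ ((1 : ℝ) / ((n + 2 - j : ℕ) : ℝ)))
        (Finset.Icc 2 (n + 1))))

/-- `C̃_v(c,a) = max{ |a|_v, |c|_v, C_v(c,a) }`. -/
def Ctilde {n : ℕ} (v : AbsoluteValue K ℝ) (c : Fin n → K) (a : K) : ℝ :=
  max (v a) (max (cnorm v c) (Cv v c a))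

/-- `h_{c,a,v}(z) = log max{ C̃_v(c,a), |z|_v }`. -/
def hca {n : ℕ} (v : AbsoluteValue K ℝ) (c : Fin n → K) (a : K) (z : K) : ℝ :=
  Real.log (max (Ctilde v c a) (v z))

/-- `log⁺ = max{0, log}`. -/
def logPlus (x : ℝ) : ℝ := max 0 (Real.log x)

/-- `U_i(ε, C) = {(c,a) : max{|c|_v,|a|_v} ≥ C and |P_{c,a}(c_i)|_v ≥ ε·max{|c|_v,|a|_v}^d}`. -/
def Uset {n : ℕ} (v : AbsoluteValue K ℝ) (i : Fin (n + 1)) (ε C : ℝ) :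
    Set ((Fin n → K) × K) :=
  {p | C ≤ max (cnorm v p.1) (v p.2) ∧
       ε * max (cnorm v p.1) (v p.2) ^ (n + 2) ≤ v (Pca p.1 p.2 (crit p.1 i))}


lemma v_nat_le_one (v : AbsoluteValue K ℝ) (hv : ∀ x y : K, v (x + y) ≤ max (v x) (v y))
    (m : ℕ) : v (m : K) ≤ 1 := by
  induction m with
  | zero => simp
  | succ k ih =>
    push_cast
    calc v ((k : K) + 1) ≤ max (v (k : K)) (v 1) := hv _ _
    _ ≤ 1 := by simp [ih]

lemma v_sum_le (v : AbsoluteValue K ℝ) (hv : ∀ x y : K, v (x + y) ≤ max (v x) (v y))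
    {ι : Type*} {s : Finset ι} {f : ι → K} {t : ℝ} (ht : 0 ≤ t)
    (h : ∀ i ∈ s, v (f i) ≤ t) : v (∑ i ∈ s, f i) ≤ t := by
  induction s using Finset.cons_induction with
  | empty => simpa using ht
  | cons a s ha ih =>
    rw [Finset.sum_cons]
    refine (hv _ _).trans (max_le (h a (Finset.mem_cons_self a s)) ?_)
    exact ih fun i hi => h i (Finset.mem_cons_of_mem hi)

lemma v_sum_lt (v : AbsoluteValue K ℝ) (hv : ∀ x y : K, v (x + y) ≤ max (v x) (v y))
    {ι : Type*} {s : Finset ι} {f : ι → K} {t : ℝ} (ht : 0 < t)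
    (h : ∀ i ∈ s, v (f i) < t) : v (∑ i ∈ s, f i) < t := by
  induction s using Finset.cons_induction with
  | empty => simpa using ht
  | cons a s ha ih =>
    rw [Finset.sum_cons]
    refine ((hv _ _).trans (max_le_max le_rfl le_rfl)).trans_lt ?_
    exact max_lt (h a (Finset.mem_cons_self a s)) (ih fun i hi => h i (Finset.mem_cons_of_mem hi))

lemma v_add_eq (v : AbsoluteValue K ℝ) (hv : ∀ x y : K, v (x + y) ≤ max (v x) (v y))
    {x y : K} (h : v y < v x) : v (x + y) = v x := by
  refine le_antisymm ((hv x y).trans (by simp [h.le])) ?_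
  by_contra hlt
  push_neg at hlt
  have : v x ≤ max (v (x + y)) (v (-y)) := by
    simpa using hv (x + y) (-y)
  rw [v.map_neg] at this
  rcases max_cases (v (x+y)) (v y) with ⟨he, _⟩ | ⟨he, _⟩ <;> rw [he] at this <;> linarith

lemma rpow_inv_pow {x y : ℝ} (hx : 0 ≤ x) {m : ℕ} (hm : m ≠ 0)
    (h : x ^ ((1:ℝ)/(m:ℝ)) ≤ y) : x ≤ y ^ m := by
  have h0 : 0 ≤ x ^ ((1:ℝ)/(m:ℝ)) := Real.rpow_nonneg hx _
  calc x = (x ^ ((1:ℝ)/(m:ℝ))) ^ m := by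
        rw [← Real.rpow_natCast (x ^ ((1:ℝ)/(m:ℝ))) m, ← Real.rpow_mul hx, one_div,
          inv_mul_cancel₀ (by exact_mod_cast hm), Real.rpow_one]
  _ ≤ y ^ m := pow_le_pow_left₀ h0 h m

lemma rpow_inv_mul_pow {x z y : ℝ} (hx : 0 ≤ x) (hz : 0 ≤ z) {m : ℕ} (hm : m ≠ 0)
    (h : x ^ ((1:ℝ)/(m:ℝ)) * z ≤ y) : x * z ^ m ≤ y ^ m := by
  have h0 : 0 ≤ x ^ ((1:ℝ)/(m:ℝ)) := Real.rpow_nonneg hx _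
  calc x * z ^ m = (x ^ ((1:ℝ)/(m:ℝ)) * z) ^ m := by
        rw [mul_pow, ← Real.rpow_natCast (x ^ ((1:ℝ)/(m:ℝ))) m, ← Real.rpow_mul hx, one_div,
          inv_mul_cancel₀ (by exact_mod_cast hm), Real.rpow_one]
  _ ≤ y ^ m := pow_le_pow_left₀ (mul_nonneg h0 hz) h m

section facts
variable [CharZero K] (v : AbsoluteValue K ℝ) {n : ℕ} (c : Fin n → K) (a : K)

lemma vd_pos : 0 < v ((n + 2 : ℕ) : K) :=
  v.pos (Nat.cast_ne_zero.2 (by omega))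

lemma one_le_alphaV {d : ℕ} (hd : 1 ≤ d) : 1 ≤ alphaV v d :=
  (Finset.le_fold_max _).2 (Or.inr ⟨1, by simp [hd], by simp⟩)

lemma inv_le_alphaV {d j : ℕ} (hj : j ∈ Finset.Icc 1 d) : (v ((j : ℕ) : K))⁻¹ ≤ alphaV v d :=
  (Finset.le_fold_max _).2 (Or.inr ⟨j, hj, le_rfl⟩)

lemma Cv_le_Ctilde : Cv v c a ≤ Ctilde v c a :=
  le_trans (le_max_right (cnorm v c) (Cv v c a)) (le_max_right (v a) _)

lemma Ct_pos : 0 < Ctilde v c a :=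
  lt_of_lt_of_le (Real.rpow_pos_of_pos (vd_pos v) _)
    ((le_max_left _ _).trans (Cv_le_Ctilde v c a))

lemma Ct_pow1 : v ((n + 2 : ℕ) : K) ≤ Ctilde v c a ^ (n + 1) := by
  refine rpow_inv_pow (v.nonneg _) (by omega) ?_
  have h1 : (v (((n + 2 : ℕ) : K))) ^ ((1 : ℝ) / ((n : ℝ) + 1)) ≤ Ctilde v c a :=
    (le_max_left _ _).trans (Cv_le_Ctilde v c a)
  convert h1 using 3
  push_cast; ring

lemma Ct_a : v ((n + 2 : ℕ) : K) * (v a) ^ (n+2) ≤ Ctilde v c a ^ (n + 2) := by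
  refine rpow_inv_mul_pow (v.nonneg _) (v.nonneg _) (by omega) ?_
  have h1 : (v (((n + 2 : ℕ) : K))) ^ ((1 : ℝ) / ((n : ℝ) + 2)) * v a ≤ Ctilde v c a :=
    ((le_max_left _ _).trans (le_max_right _ _)).trans (Cv_le_Ctilde v c a)
  convert h1 using 4
  push_cast; ring

lemma Ct_sigma {j : ℕ} (hj : j ∈ Finset.Icc 2 (n+1)) :
    v (esymmK c (n + 2 - j)) * (v ((n + 2 : ℕ) : K) / v ((j : ℕ) : K))
      ≤ Ctilde v c a ^ (n + 2 - j) := by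
  have h1 : (v (esymmK c (n + 2 - j)) * v (((n + 2 : ℕ) : K) / ((j : ℕ) : K)))
      ^ ((1 : ℝ) / ((n + 2 - j : ℕ) : ℝ)) ≤ Ctilde v c a :=
    (((Finset.le_fold_max _).2 (Or.inr ⟨j, hj, le_rfl⟩)).trans
      ((le_max_right _ _).trans (le_max_right _ _))).trans (Cv_le_Ctilde v c a)
  rw [map_div₀] at h1
  exact rpow_inv_pow (by positivity) (by simp only [Finset.mem_Icc] at hj; omega) h1
end facts

section poly
variable [CharZero K] (v : AbsoluteValue K ℝ)
  (hv : ∀ x y : K, v (x + y) ≤ max (v x) (v y)) {n : ℕ} (c : Fin n → K) (a : K)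

lemma term_le {z : K} {j : ℕ} (hj : j ∈ Finset.Icc 2 (n+1)) :
    v (((-1 : K) ^ (n + 2 - j) * esymmK c (n + 2 - j) * z ^ j) / ((j : ℕ) : K))
      ≤ max (Ctilde v c a) (v z) ^ (n + 2) / v ((n + 2 : ℕ) : K) := by
  have hjm : 2 ≤ j ∧ j ≤ n + 1 := Finset.mem_Icc.1 hj
  have hvj : 0 < v ((j : ℕ) : K) := v.pos (Nat.cast_ne_zero.2 (by omega))
  have hvd : 0 < v ((n + 2 : ℕ) : K) := vd_pos v
  have ht0 : 0 < max (Ctilde v c a) (v z) := lt_max_of_lt_left (Ct_pos v c a)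
  set t := max (Ctilde v c a) (v z) with htdef
  have hvz : v z ≤ t := le_max_right _ _
  have hCt : Ctilde v c a ≤ t := le_max_left _ _
  rw [map_div₀, map_mul, map_mul, map_pow, map_pow, v.map_neg, v.map_one, one_pow, one_mul]
  rw [div_le_div_iff₀ hvj hvd]
  have h1 : v (esymmK c (n + 2 - j)) * v ((n + 2 : ℕ) : K)
      ≤ Ctilde v c a ^ (n + 2 - j) * v ((j : ℕ) : K) := by
    calc v (esymmK c (n + 2 - j)) * v ((n + 2 : ℕ) : K)
        = v (esymmK c (n + 2 - j)) * (v ((n + 2 : ℕ) : K) / v ((j : ℕ) : K)) * v ((j : ℕ) : K) := by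
          field_simp
    _ ≤ Ctilde v c a ^ (n + 2 - j) * v ((j : ℕ) : K) :=
        mul_le_mul_of_nonneg_right (Ct_sigma v c a hj) hvj.le
  calc v (esymmK c (n + 2 - j)) * v z ^ j * v ((n + 2 : ℕ) : K)
      = v (esymmK c (n + 2 - j)) * v ((n + 2 : ℕ) : K) * v z ^ j := by ring
  _ ≤ Ctilde v c a ^ (n + 2 - j) * v ((j : ℕ) : K) * v z ^ j :=
      mul_le_mul_of_nonneg_right h1 (by positivity)
  _ ≤ t ^ (n + 2 - j) * v ((j : ℕ) : K) * t ^ j := by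
      have h2 : Ctilde v c a ^ (n + 2 - j) ≤ t ^ (n + 2 - j) :=
        pow_le_pow_left₀ (Ct_pos v c a).le hCt _
      have h3 : v z ^ j ≤ t ^ j := pow_le_pow_left₀ (v.nonneg _) hvz _
      calc Ctilde v c a ^ (n + 2 - j) * v ((j : ℕ) : K) * v z ^ j
          ≤ t ^ (n + 2 - j) * v ((j : ℕ) : K) * v z ^ j :=
            mul_le_mul_of_nonneg_right (mul_le_mul_of_nonneg_right h2 hvj.le) (by positivity)
      _ ≤ t ^ (n + 2 - j) * v ((j : ℕ) : K) * t ^ j :=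
            mul_le_mul_of_nonneg_left h3 (by positivity)
  _ = t ^ (n + 2) * v ((j : ℕ) : K) := by
      rw [mul_right_comm, ← pow_add]
      congr 2
      omega

lemma term_lt {z : K} (hz : Ctilde v c a < v z) {j : ℕ} (hj : j ∈ Finset.Icc 2 (n+1)) :
    v (((-1 : K) ^ (n + 2 - j) * esymmK c (n + 2 - j) * z ^ j) / ((j : ℕ) : K))
      < v z ^ (n + 2) / v ((n + 2 : ℕ) : K) := by
  have hjm : 2 ≤ j ∧ j ≤ n + 1 := Finset.mem_Icc.1 hj
  have hvj : 0 < v ((j : ℕ) : K) := v.pos (Nat.cast_ne_zero.2 (by omega))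
  have hvd : 0 < v ((n + 2 : ℕ) : K) := vd_pos v
  have hz0 : 0 < v z := (Ct_pos v c a).trans hz
  rw [map_div₀, map_mul, map_mul, map_pow, map_pow, v.map_neg, v.map_one, one_pow, one_mul]
  rw [div_lt_div_iff₀ hvj hvd]
  have h1 : v (esymmK c (n + 2 - j)) * v ((n + 2 : ℕ) : K)
      ≤ Ctilde v c a ^ (n + 2 - j) * v ((j : ℕ) : K) := by
    calc v (esymmK c (n + 2 - j)) * v ((n + 2 : ℕ) : K)
        = v (esymmK c (n + 2 - j)) * (v ((n + 2 : ℕ) : K) / v ((j : ℕ) : K)) * v ((j : ℕ) : K) := by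
          field_simp
    _ ≤ Ctilde v c a ^ (n + 2 - j) * v ((j : ℕ) : K) :=
        mul_le_mul_of_nonneg_right (Ct_sigma v c a hj) hvj.le
  have h2 : Ctilde v c a ^ (n + 2 - j) < v z ^ (n + 2 - j) :=
    pow_lt_pow_left₀ hz (Ct_pos v c a).le (by omega)
  calc v (esymmK c (n + 2 - j)) * v z ^ j * v ((n + 2 : ℕ) : K)
      = v (esymmK c (n + 2 - j)) * v ((n + 2 : ℕ) : K) * v z ^ j := by ring
  _ ≤ Ctilde v c a ^ (n + 2 - j) * v ((j : ℕ) : K) * v z ^ j :=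
      mul_le_mul_of_nonneg_right h1 (by positivity)
  _ < v z ^ (n + 2 - j) * v ((j : ℕ) : K) * v z ^ j := by
      have : 0 < v ((j : ℕ) : K) * v z ^ j := by positivity
      calc Ctilde v c a ^ (n + 2 - j) * v ((j : ℕ) : K) * v z ^ j
          = Ctilde v c a ^ (n + 2 - j) * (v ((j : ℕ) : K) * v z ^ j) := by ring
      _ < v z ^ (n + 2 - j) * (v ((j : ℕ) : K) * v z ^ j) :=
          (mul_lt_mul_iff_left₀ this).2 h2
      _ = v z ^ (n + 2 - j) * v ((j : ℕ) : K) * v z ^ j := by ring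
  _ = v z ^ (n + 2) * v ((j : ℕ) : K) := by
      rw [mul_right_comm, ← pow_add]
      congr 2
      omega

end poly

section poly2
variable [CharZero K] (v : AbsoluteValue K ℝ) {n : ℕ} (c : Fin n → K) (a : K)

lemma t_le_pow {z : K} :
    max (Ctilde v c a) (v z) ≤ max (Ctilde v c a) (v z) ^ (n + 2) / v ((n + 2 : ℕ) : K) := by
  have hvd : 0 < v ((n + 2 : ℕ) : K) := vd_pos v
  have ht0 : 0 < max (Ctilde v c a) (v z) := lt_max_of_lt_left (Ct_pos v c a)
  rw [le_div_iff₀ hvd]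
  calc max (Ctilde v c a) (v z) * v ((n + 2 : ℕ) : K)
      ≤ max (Ctilde v c a) (v z) * Ctilde v c a ^ (n + 1) :=
        mul_le_mul_of_nonneg_left (Ct_pow1 v c a) ht0.le
  _ ≤ max (Ctilde v c a) (v z) * max (Ctilde v c a) (v z) ^ (n + 1) :=
        mul_le_mul_of_nonneg_left
          (pow_le_pow_left₀ (Ct_pos v c a).le (le_max_left _ _) _) ht0.le
  _ = max (Ctilde v c a) (v z) ^ (n + 2) := by ring

lemma vP_le (hv : ∀ x y : K, v (x + y) ≤ max (v x) (v y)) (z : K) :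
    v (Pca c a z) ≤ max (Ctilde v c a) (v z) ^ (n + 2) / v ((n + 2 : ℕ) : K) := by
  have hvd : 0 < v ((n + 2 : ℕ) : K) := vd_pos v
  have ht0 : 0 < max (Ctilde v c a) (v z) := lt_max_of_lt_left (Ct_pos v c a)
  set t := max (Ctilde v c a) (v z) with htdef
  have hbd : (0:ℝ) ≤ t ^ (n + 2) / v ((n + 2 : ℕ) : K) := by positivity
  have hA : v (z ^ (n + 2) / ((n + 2 : ℕ) : K)) ≤ t ^ (n + 2) / v ((n + 2 : ℕ) : K) := by
    rw [map_div₀, map_pow]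
    exact div_le_div_of_nonneg_right (pow_le_pow_left₀ (v.nonneg _) (le_max_right _ _) _) hvd.le
  have hS : v (∑ j ∈ Finset.Icc 2 (n + 1),
      ((-1 : K) ^ (n + 2 - j) * esymmK c (n + 2 - j) * z ^ j) / ((j : ℕ) : K))
      ≤ t ^ (n + 2) / v ((n + 2 : ℕ) : K) :=
    v_sum_le v hv hbd fun j hj => term_le v c a hj
  have hB : v (a ^ (n + 2)) ≤ t ^ (n + 2) / v ((n + 2 : ℕ) : K) := by
    rw [map_pow, le_div_iff₀ hvd]
    calc v a ^ (n + 2) * v ((n + 2 : ℕ) : K) = v ((n + 2 : ℕ) : K) * v a ^ (n + 2) := by ring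
    _ ≤ Ctilde v c a ^ (n + 2) := Ct_a v c a
    _ ≤ t ^ (n + 2) := pow_le_pow_left₀ (Ct_pos v c a).le (le_max_left _ _) _
  calc v (Pca c a z) ≤ max (v (z ^ (n + 2) / ((n + 2 : ℕ) : K) + ∑ j ∈ Finset.Icc 2 (n + 1),
        ((-1 : K) ^ (n + 2 - j) * esymmK c (n + 2 - j) * z ^ j) / ((j : ℕ) : K)))
        (v (a ^ (n + 2))) := hv _ _
  _ ≤ t ^ (n + 2) / v ((n + 2 : ℕ) : K) :=
      max_le ((hv _ _).trans (max_le hA hS)) hB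

lemma vP_eq (hv : ∀ x y : K, v (x + y) ≤ max (v x) (v y)) {z : K}
    (hz : Ctilde v c a < v z) :
    v (Pca c a z) = v z ^ (n + 2) / v ((n + 2 : ℕ) : K) := by
  have hvd : 0 < v ((n + 2 : ℕ) : K) := vd_pos v
  have hz0 : 0 < v z := (Ct_pos v c a).trans hz
  have hbd : (0:ℝ) < v z ^ (n + 2) / v ((n + 2 : ℕ) : K) := by positivity
  have hA : v (z ^ (n + 2) / ((n + 2 : ℕ) : K)) = v z ^ (n + 2) / v ((n + 2 : ℕ) : K) := by
    rw [map_div₀, map_pow]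
  have hS : v (∑ j ∈ Finset.Icc 2 (n + 1),
      ((-1 : K) ^ (n + 2 - j) * esymmK c (n + 2 - j) * z ^ j) / ((j : ℕ) : K))
      < v z ^ (n + 2) / v ((n + 2 : ℕ) : K) :=
    v_sum_lt v hv hbd fun j hj => term_lt v c a hz hj
  have hB : v (a ^ (n + 2)) < v z ^ (n + 2) / v ((n + 2 : ℕ) : K) := by
    rw [map_pow, lt_div_iff₀ hvd]
    calc v a ^ (n + 2) * v ((n + 2 : ℕ) : K) = v ((n + 2 : ℕ) : K) * v a ^ (n + 2) := by ring
    _ ≤ Ctilde v c a ^ (n + 2) := Ct_a v c a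
    _ < v z ^ (n + 2) := pow_lt_pow_left₀ hz (Ct_pos v c a).le (by omega)
  have e1 : v (z ^ (n + 2) / ((n + 2 : ℕ) : K) + ∑ j ∈ Finset.Icc 2 (n + 1),
      ((-1 : K) ^ (n + 2 - j) * esymmK c (n + 2 - j) * z ^ j) / ((j : ℕ) : K))
      = v z ^ (n + 2) / v ((n + 2 : ℕ) : K) := by
    rw [v_add_eq v hv (by rw [hA]; exact hS), hA]
  rw [Pca, v_add_eq v hv (by rw [e1]; exact hB), e1]

lemma hca_step_le (hv : ∀ x y : K, v (x + y) ≤ max (v x) (v y)) (z : K) :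
    hca v c a (Pca c a z) ≤ ((n:ℝ) + 2) * hca v c a z + Real.log (alphaV v (n + 2)) := by
  have hvd : 0 < v ((n + 2 : ℕ) : K) := vd_pos v
  have ht0 : 0 < max (Ctilde v c a) (v z) := lt_max_of_lt_left (Ct_pos v c a)
  set t := max (Ctilde v c a) (v z) with htdef
  have halpha : (0:ℝ) < alphaV v (n + 2) := lt_of_lt_of_le one_pos (one_le_alphaV v (by omega))
  have hfrac : t ^ (n + 2) / v ((n + 2 : ℕ) : K) ≤ alphaV v (n + 2) * t ^ (n + 2) := by
    rw [div_eq_mul_inv, mul_comm]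
    exact mul_le_mul_of_nonneg_right
      (inv_le_alphaV v (Finset.mem_Icc.2 ⟨by omega, le_rfl⟩)) (by positivity)
  have hmax : max (Ctilde v c a) (v (Pca c a z)) ≤ alphaV v (n + 2) * t ^ (n + 2) :=
    max_le (((le_max_left _ _).trans (t_le_pow v c a)).trans hfrac)
      ((vP_le v c a hv z).trans hfrac)
  have h1 : hca v c a (Pca c a z) ≤ Real.log (alphaV v (n + 2) * t ^ (n + 2)) :=
    Real.log_le_log (lt_max_of_lt_left (Ct_pos v c a)) hmax
  calc hca v c a (Pca c a z) ≤ Real.log (alphaV v (n + 2) * t ^ (n + 2)) := h1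
  _ = Real.log (alphaV v (n + 2)) + ((n:ℝ) + 2) * Real.log t := by
      rw [Real.log_mul halpha.ne' (by positivity), Real.log_pow]
      push_cast; ring
  _ = ((n:ℝ) + 2) * hca v c a z + Real.log (alphaV v (n + 2)) := by
      rw [hca]; ring

lemma hca_step_ge (hv : ∀ x y : K, v (x + y) ≤ max (v x) (v y)) (z : K) :
    ((n:ℝ) + 2) * hca v c a z
        - (((n:ℝ) + 1) * |Real.log (Ctilde v c a)| + Real.log (alphaV v (n + 2)))
      ≤ hca v c a (Pca c a z) := by
  have hvd : 0 < v ((n + 2 : ℕ) : K) := vd_pos v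
  have hCt0 : 0 < Ctilde v c a := Ct_pos v c a
  have halpha : (0:ℝ) ≤ Real.log (alphaV v (n + 2)) :=
    Real.log_nonneg (one_le_alphaV v (by omega))
  rcases le_or_gt (v z) (Ctilde v c a) with hle | hlt
  · have h1 : hca v c a z = Real.log (Ctilde v c a) := by rw [hca, max_eq_left hle]
    have h2 : Real.log (Ctilde v c a) ≤ hca v c a (Pca c a z) :=
      Real.log_le_log hCt0 (le_max_left _ _)
    have habs : Real.log (Ctilde v c a) ≤ |Real.log (Ctilde v c a)| := le_abs_self _
    rw [h1]
    nlinarith [abs_nonneg (Real.log (Ctilde v c a))]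
  · have hz0 : 0 < v z := hCt0.trans hlt
    have h1 : hca v c a z = Real.log (v z) := by rw [hca, max_eq_right hlt.le]
    have hPz : v (Pca c a z) = v z ^ (n + 2) / v ((n + 2 : ℕ) : K) := vP_eq v c a hv hlt
    have hge : v z ≤ v (Pca c a z) := by
      rw [hPz, le_div_iff₀ hvd]
      calc v z * v ((n + 2 : ℕ) : K) ≤ v z * Ctilde v c a ^ (n + 1) :=
            mul_le_mul_of_nonneg_left (Ct_pow1 v c a) hz0.le
      _ ≤ v z * v z ^ (n + 1) :=
            mul_le_mul_of_nonneg_left (pow_le_pow_left₀ hCt0.le hlt.le _) hz0.le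
      _ = v z ^ (n + 2) := by ring
    have hmax : max (Ctilde v c a) (v (Pca c a z)) = v (Pca c a z) :=
      max_eq_right (hlt.le.trans hge)
    have hvd1 : v ((n + 2 : ℕ) : K) ≤ 1 := v_nat_le_one v hv _
    have h2 : hca v c a (Pca c a z)
        = ((n:ℝ) + 2) * Real.log (v z) - Real.log (v ((n + 2 : ℕ) : K)) := by
      rw [hca, hmax, hPz, Real.log_div (by positivity) hvd.ne', Real.log_pow]
      push_cast; ring
    have hlogd : Real.log (v ((n + 2 : ℕ) : K)) ≤ 0 := Real.log_nonpos hvd.le hvd1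
    rw [h1, h2]
    nlinarith [abs_nonneg (Real.log (Ctilde v c a))]
end poly2

/-- let `C_v ≥ 1` be a constant with `C̃_v(c,a) ≤ C_v·max{1,|c|_v,|a|_v}` for
all `(c,a)`. Then for all `i`, `C ≥ 1`, `ε > 0` with `C^d·ε > max{1, C_v·C}`, and all `(c,a)`
with `max{|c|_v,|a|_v} ≥ C` and `(c,a) ∉ U_i(ε,C)`, one has
`g_{c,a,v}(c_i) ≤ log max{|c|_v,|a|_v} + (1/d)·log ε + (1/(d(d-1)))·log α_v`.
Here `d = n + 2`. -/
theorem statement8 {K : Type*} [Field K] [IsAlgClosed K] [CharZero K]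
    (v : AbsoluteValue K ℝ) (hv : ∀ x y : K, v (x + y) ≤ max (v x) (v y)) (n : ℕ)
    (Cv0 : ℝ) (hCv0 : 1 ≤ Cv0)
    (hCt : ∀ (c : Fin n → K) (a : K), Ctilde v c a ≤ Cv0 * max 1 (max (cnorm v c) (v a))) :
    ∃ g : (Fin n → K) → K → K → ℝ,
      -- `g` is the `v`-adic Green function
      (∀ (c : Fin n → K) (a z : K),
        Tendsto (fun m : ℕ => hca v c a ((Pca c a)^[m] z) / ((n : ℝ) + 2) ^ m)
          atTop (nhds (g c a z))) ∧
      ∀ (i : Fin (n + 1)) (C ε : ℝ) (c : Fin n → K) (a : K),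
        1 ≤ C → 0 < ε → max 1 (Cv0 * C) < C ^ (n + 2) * ε →
        C ≤ max (cnorm v c) (v a) → (c, a) ∉ Uset v i ε C →
        g c a (crit c i)
          ≤ Real.log (max (cnorm v c) (v a)) + (1 / ((n : ℝ) + 2)) * Real.log ε
            + (1 / (((n : ℝ) + 2) * ((n : ℝ) + 1))) * Real.log (alphaV v (n + 2)) := by
  classical
  set D : ℝ := (n : ℝ) + 2 with hD
  have hD2 : (2:ℝ) ≤ D := by rw [hD]; have := Nat.cast_nonneg (α := ℝ) n; linarith
  have hD0 : (0:ℝ) < D := by linarith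
  set L : ℝ := Real.log (alphaV v (n + 2)) with hL
  have hL0 : 0 ≤ L := Real.log_nonneg (one_le_alphaV v (by omega))
  -- the sequence
  set u : (Fin n → K) → K → K → ℕ → ℝ :=
    fun c a z m => hca v c a ((Pca c a)^[m] z) / D ^ m with hu
  -- step inequalities
  have step_le : ∀ (c : Fin n → K) (a z : K) (m : ℕ),
      u c a z (m + 1) ≤ u c a z m + L / D ^ (m + 1) := by
    intro c a z m
    have h := hca_step_le v c a hv ((Pca c a)^[m] z)
    rw [← Function.iterate_succ_apply' (Pca c a) m z, ← hD, ← hL] at h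
    have hDm : (0:ℝ) < D ^ (m+1) := by positivity
    have hDm' : (0:ℝ) < D ^ m := by positivity
    simp only [hu]
    have heq : hca v c a ((Pca c a)^[m] z) / D ^ m + L / D ^ (m+1)
        = (D * hca v c a ((Pca c a)^[m] z) + L) / D ^ (m+1) := by
      field_simp
      ring
    rw [heq]
    exact div_le_div_of_nonneg_right (by linarith) hDm.le
  have step_ge : ∀ (c : Fin n → K) (a z : K) (m : ℕ),
      u c a z m - (((n:ℝ) + 1) * |Real.log (Ctilde v c a)| + L) / D ^ (m + 1)
        ≤ u c a z (m + 1) := by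
    intro c a z m
    have h := hca_step_ge v c a hv ((Pca c a)^[m] z)
    rw [← Function.iterate_succ_apply' (Pca c a) m z, ← hD, ← hL] at h
    have hDm : (0:ℝ) < D ^ (m+1) := by positivity
    have hDm' : (0:ℝ) < D ^ m := by positivity
    simp only [hu]
    have heq : hca v c a ((Pca c a)^[m] z) / D ^ m
          - (((n:ℝ) + 1) * |Real.log (Ctilde v c a)| + L) / D ^ (m+1)
        = (D * hca v c a ((Pca c a)^[m] z)
            - (((n:ℝ) + 1) * |Real.log (Ctilde v c a)| + L)) / D ^ (m+1) := by
      field_simp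
      ring
    rw [heq]
    exact div_le_div_of_nonneg_right (by linarith) hDm.le
  -- Cauchy
  have hcauchy : ∀ (c : Fin n → K) (a z : K), CauchySeq (u c a z) := by
    intro c a z
    set B : ℝ := ((n:ℝ) + 1) * |Real.log (Ctilde v c a)| + L with hB
    have hB0 : 0 ≤ B := by positivity
    refine cauchySeq_of_le_geometric (1/D) (B/D) (by rw [div_lt_one hD0]; linarith) ?_
    intro m
    rw [Real.dist_eq, abs_sub_comm, abs_le]
    have h1 := step_le c a z m
    have h2 := step_ge c a z m
    have hLB : L ≤ B := by
      have h0 : 0 ≤ ((n:ℝ)+1) * |Real.log (Ctilde v c a)| := by positivity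
      rw [hB]; linarith
    have hDm : (0:ℝ) < D ^ (m+1) := by positivity
    have heq : B / D * (1 / D) ^ m = B / D ^ (m+1) := by
      rw [div_pow, one_pow, div_mul_div_comm, mul_one, ← pow_succ']
    constructor
    · have : u c a z m - B / D ^ (m+1) ≤ u c a z (m+1) := by
        refine le_trans (by linarith) h2
      linarith [heq ▸ this]
    · have : u c a z (m+1) ≤ u c a z m + B / D ^ (m+1) := by
        refine h1.trans ?_
        have : L / D^(m+1) ≤ B / D^(m+1) :=
          div_le_div_of_nonneg_right hLB hDm.le
        linarith
      rw [heq]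
      linarith
  refine ⟨fun c a z => limUnder atTop (u c a z), fun c a z => (hcauchy c a z).tendsto_limUnder, ?_⟩
  intro i C ε c a hC hε hCε hM hU
  set M : ℝ := max (cnorm v c) (v a) with hMdef
  have hM1 : (1:ℝ) ≤ M := hC.trans hM
  have hM0 : (0:ℝ) < M := by linarith
  set z : K := crit c i with hz
  -- bound on hca (P z)
  have hPz_lt : v (Pca c a z) < ε * M ^ (n + 2) := by
    by_contra hcon
    push_neg at hcon
    exact hU ⟨hM, hcon⟩
  have hCtM : Ctilde v c a ≤ Cv0 * M := by
    have := hCt c a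
    rwa [max_eq_right hM1] at this
  have hCv0M : Cv0 * M ≤ ε * M ^ (n + 2) := by
    have hC0 : (0:ℝ) < C := by linarith
    have h1 : Cv0 * C < C ^ (n + 2) * ε := (le_max_right _ _).trans_lt hCε
    have h2 : Cv0 < C ^ (n + 1) * ε := by
      rw [← mul_lt_mul_iff_left₀ hC0]
      calc Cv0 * C < C ^ (n+2) * ε := h1
      _ = C ^ (n+1) * ε * C := by ring
    have h3 : C ^ (n+1) ≤ M ^ (n+1) := pow_le_pow_left₀ hC0.le hM _
    calc Cv0 * M ≤ (C ^ (n+1) * ε) * M := mul_le_mul_of_nonneg_right h2.le hM0.le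
    _ ≤ (M ^ (n+1) * ε) * M := mul_le_mul_of_nonneg_right
        (mul_le_mul_of_nonneg_right h3 hε.le) hM0.le
    _ = ε * M ^ (n+2) := by ring
  have hmaxP : max (Ctilde v c a) (v (Pca c a z)) ≤ ε * M ^ (n + 2) :=
    max_le (hCtM.trans hCv0M) hPz_lt.le
  have hu1 : hca v c a (Pca c a z) ≤ Real.log ε + D * Real.log M := by
    calc hca v c a (Pca c a z) ≤ Real.log (ε * M ^ (n+2)) :=
        Real.log_le_log (lt_max_of_lt_left (Ct_pos v c a)) hmaxP
    _ = Real.log ε + D * Real.log M := by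
        rw [Real.log_mul hε.ne' (by positivity), Real.log_pow]
        push_cast [hD]; ring
  -- u (m+1) ≤ u 1 + L/(D(D-1)) - L/((D-1) * D^(m+1))
  have key : ∀ m : ℕ, u c a z (m + 1)
      ≤ u c a z 1 + L / (D * (D - 1)) - L / ((D - 1) * D ^ (m + 1)) := by
    intro m
    induction m with
    | zero =>
      have : L / (D * (D - 1)) - L / ((D - 1) * D ^ 1) = 0 := by
        rw [pow_one]; ring
      linarith [step_le c a z 0, this]
    | succ k ih =>
      have h1 := step_le c a z (k + 1)
      have hD1 : (0:ℝ) < D - 1 := by linarith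
      have hp1 : (0:ℝ) < D ^ (k+1) := by positivity
      have hp2 : (0:ℝ) < D ^ (k+2) := by positivity
      have harith : L / D ^ (k + 2) - L / ((D - 1) * D ^ (k + 1))
          = - (L / ((D - 1) * D ^ (k + 2))) := by
        have hpow : D ^ (k+2) = D * D ^ (k+1) := by ring
        rw [hpow]
        field_simp
        ring
      calc u c a z (k + 2) ≤ u c a z (k+1) + L / D ^ (k+2) := h1
      _ ≤ u c a z 1 + L / (D * (D - 1)) - L / ((D - 1) * D ^ (k + 1)) + L / D ^ (k+2) := by
          linarith
      _ ≤ u c a z 1 + L / (D * (D - 1)) - L / ((D - 1) * D ^ (k + 2)) := by linarith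
  -- limit bound
  have hg_le : limUnder atTop (u c a z) ≤ u c a z 1 + L / (D * (D - 1)) := by
    have htend : Tendsto (fun m => u c a z (m + 1)) atTop (nhds (limUnder atTop (u c a z))) :=
      (hcauchy c a z).tendsto_limUnder.comp (tendsto_add_atTop_nat 1)
    refine le_of_tendsto htend (Eventually.of_forall fun m => ?_)
    have hD1 : (0:ℝ) < D - 1 := by linarith
    have : 0 ≤ L / ((D - 1) * D ^ (m + 1)) := by positivity
    linarith [key m]
  have hu1' : u c a z 1 ≤ (Real.log ε + D * Real.log M) / D := by
    rw [hu]
    simp only [Function.iterate_one, pow_one]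
    exact div_le_div_of_nonneg_right hu1 hD0.le
  calc limUnder atTop (u c a z) ≤ u c a z 1 + L / (D * (D - 1)) := hg_le
  _ ≤ (Real.log ε + D * Real.log M) / D + L / (D * (D - 1)) := by linarith
  _ = Real.log M + (1 / D) * Real.log ε + (1 / (D * ((n:ℝ)+1))) * L := by
      have hD1 : D - 1 = (n:ℝ) + 1 := by rw [hD]; ring
      rw [hD1]
      field_simp
      ring
  _ = Real.log (max (cnorm v c) (v a)) + (1 / ((n : ℝ) + 2)) * Real.log ε
      + (1 / (((n : ℝ) + 2) * ((n : ℝ) + 1))) * Real.log (alphaV v (n + 2)) := by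
      rw [hMdef, hD, hL]
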